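/- Let G be a digraph of order n whose minimum outdegree is at least d. Then G contains a subdivision of the complete digraph of order ⌊d²/(8·n^{3/2})⌋. -/

import Mathlib

open scoped Classical

/-- `p` is the list of internal vertices of a directed path from `x` to `y` in the
digraph with adjacency relation `A`: the full vertex sequence `x :: p ++ [y]` is a
chain of directed edges and has no repeated vertices. -/
def IsDipath {V : Type*} (A : V → V → Prop) (x y : V) (p : List V) : Prop :=
  List.Chain' A (x :: p ++ [y]) ∧ (x :: p ++ [y]).Nodup

/-- The outdegree of a vertex `v` in the digraph with adjacency relation `A`. -/
noncomputable def outDeg {V : Type*} [Fintype V] (A : V → V → Prop) (v : V) : ℕ :=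
  (Finset.univ.filter fun w => A v w).card

/-- The digraph with adjacency relation `A` contains a subdivision of the complete
digraph of order `ℓ`: there are `ℓ` distinct branch vertices `b i`, and for every
ordered pair of distinct indices `i, j` a directed path from `b i` to `b j` whose
internal vertices avoid all branch vertices, these paths being pairwise internally
disjoint. -/
def ContainsCompleteSubdivision {V : Type*} (A : V → V → Prop) (ℓ : ℕ) : Prop :=
  ∃ (b : Fin ℓ → V) (P : Fin ℓ → Fin ℓ → List V),
    Function.Injective b ∧
    (∀ i j : Fin ℓ, i ≠ j → IsDipath A (b i) (b j) (P i j)) ∧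
    (∀ i j : Fin ℓ, i ≠ j → ∀ k : Fin ℓ, b k ∉ P i j) ∧
    (∀ i j i' j' : Fin ℓ, i ≠ j → i' ≠ j' → (i, j) ≠ (i', j') →
      ∀ v ∈ P i j, v ∉ P i' j')

set_option linter.unusedSectionVars false
set_option linter.unusedVariables false
set_option linter.deprecated false

namespace KOY

theorem poly_ineq (M D : ℝ) (hD : 256 ≤ D) (hDM : D + 1 ≤ M) :
    81*M*(2*M - D + 1)^3 ≤ 8*(3*M - D)^4 := by
  nlinarith [sq_nonneg (M - D), sq_nonneg (M + D), sq_nonneg M, sq_nonneg D,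
    mul_pos (by linarith : (0:ℝ) < M) (by linarith : (0:ℝ) < D),
    sq_nonneg (M - D - 1), mul_nonneg (by linarith : (0:ℝ) ≤ M - D) (by linarith : (0:ℝ) ≤ D - 256),
    mul_nonneg (mul_nonneg (by linarith : (0:ℝ) ≤ M - D) (by linarith : (0:ℝ) ≤ D - 256)) (by linarith : (0:ℝ) ≤ M),
    mul_nonneg (mul_nonneg (by linarith : (0:ℝ) ≤ M - D) (by linarith : (0:ℝ) ≤ D - 256)) (by linarith : (0:ℝ) ≤ D),
    mul_nonneg (mul_nonneg (by linarith : (0:ℝ) ≤ M - D) (by linarith : (0:ℝ) ≤ M - D)) (by linarith : (0:ℝ) ≤ D - 256),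
    mul_nonneg (mul_nonneg (by linarith : (0:ℝ) ≤ M - D) (by linarith : (0:ℝ) ≤ M - D)) (by linarith : (0:ℝ) ≤ M)]


theorem recurse_inv (k δ m h s : ℕ)
    (hinv : 64*k^2*m^3 ≤ δ^4) (hδ : 256 ≤ δ) (hδm : δ < m)
    (hh : 3*m*h ≤ δ^2) (hs : s ≤ m - δ/2) :
    64*k^2*s^3 ≤ (δ - h)^4 := by
  have hm0 : 0 < m := by omega
  have hhδ : 3*h ≤ δ := by
    have h1 : δ^2 ≤ δ*m := by
      have hδm' : δ ≤ m := by omega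
      calc δ^2 = δ*δ := sq δ
      _ ≤ δ*m := Nat.mul_le_mul_left δ hδm'
    have h3 : m*(3*h) ≤ m*δ := by
      calc m*(3*h) = 3*m*h := by ring
      _ ≤ δ*m := le_trans hh h1
      _ = m*δ := by ring
    exact Nat.le_of_mul_le_mul_left h3 hm0
  have hhδ' : h ≤ δ := by omega
  have hinvr : 64*(k:ℝ)^2*(m:ℝ)^3 ≤ (δ:ℝ)^4 := by exact_mod_cast hinv
  have hδr : (256:ℝ) ≤ (δ:ℝ) := by exact_mod_cast hδ
  have hδmr : (δ:ℝ) + 1 ≤ (m:ℝ) := by exact_mod_cast hδm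
  have hhr : 3*(m:ℝ)*(h:ℝ) ≤ (δ:ℝ)^2 := by exact_mod_cast hh
  have hM0 : (0:ℝ) < (m:ℝ) := by exact_mod_cast hm0
  have hsr : (s:ℝ) ≤ (2*(m:ℝ) - (δ:ℝ) + 1)/2 := by
    have h1 : (s:ℝ) ≤ ((m - δ/2 : ℕ):ℝ) := by exact_mod_cast hs
    have h2 : ((m - δ/2 : ℕ):ℝ) ≤ (m:ℝ) - ((δ:ℝ)-1)/2 := by
      have h3 : δ/2 ≤ m := by omega
      rw [Nat.cast_sub h3]
      have h4 : ((δ:ℝ)-1)/2 ≤ ((δ/2 : ℕ):ℝ) := by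
        have h5 : δ ≤ 2*(δ/2) + 1 := by omega
        have h6 : (δ:ℝ) ≤ 2*((δ/2:ℕ):ℝ) + 1 := by exact_mod_cast h5
        linarith
      linarith
    linarith
  -- key bounds
  have ha0 : (0:ℝ) ≤ (2*(m:ℝ) - (δ:ℝ) + 1)/2 := by linarith
  have hS0 : (0:ℝ) ≤ (s:ℝ) := by positivity
  have hb : (δ:ℝ)*(3*(m:ℝ) - (δ:ℝ)) ≤ 3*(m:ℝ)*((δ:ℝ) - (h:ℝ)) := by nlinarith [hhr]
  have hb0 : (0:ℝ) ≤ (δ:ℝ)*(3*(m:ℝ) - (δ:ℝ)) := by nlinarith [hδr, hδmr]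
  -- step 1: 64 K² S³ M³ ≤ D⁴ a³
  have h1 : 64*(k:ℝ)^2*(s:ℝ)^3*(m:ℝ)^3 ≤ (δ:ℝ)^4*((2*(m:ℝ) - (δ:ℝ) + 1)/2)^3 := by
    have hcube : (s:ℝ)^3 ≤ ((2*(m:ℝ) - (δ:ℝ) + 1)/2)^3 := pow_le_pow_left₀ hS0 hsr 3
    calc 64*(k:ℝ)^2*(s:ℝ)^3*(m:ℝ)^3 = (64*(k:ℝ)^2*(m:ℝ)^3)*(s:ℝ)^3 := by ring
    _ ≤ (δ:ℝ)^4*((2*(m:ℝ) - (δ:ℝ) + 1)/2)^3 :=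
        mul_le_mul hinvr hcube (by positivity) (by positivity)
  -- step 2: with poly_ineq, 81 M D⁴ a³ ≤ D⁴ (3M−D)⁴
  have h2 : 81*(m:ℝ)*((δ:ℝ)^4*((2*(m:ℝ) - (δ:ℝ) + 1)/2)^3) ≤ (δ:ℝ)^4*(3*(m:ℝ)-(δ:ℝ))^4 := by
    have hp := poly_ineq (m:ℝ) (δ:ℝ) hδr hδmr
    have hD4 : (0:ℝ) ≤ (δ:ℝ)^4 := by positivity
    have := mul_le_mul_of_nonneg_left hp hD4
    calc 81*(m:ℝ)*((δ:ℝ)^4*((2*(m:ℝ) - (δ:ℝ) + 1)/2)^3)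
        = (δ:ℝ)^4*(81*(m:ℝ)*(2*(m:ℝ) - (δ:ℝ) + 1)^3)/8 := by ring
    _ ≤ (δ:ℝ)^4*(8*(3*(m:ℝ)-(δ:ℝ))^4)/8 := by linarith [this]
    _ = (δ:ℝ)^4*(3*(m:ℝ)-(δ:ℝ))^4 := by ring
  -- step 3: (D(3M−D))⁴ ≤ (3M(D−H))⁴
  have h3 : ((δ:ℝ)*(3*(m:ℝ)-(δ:ℝ)))^4 ≤ (3*(m:ℝ)*((δ:ℝ)-(h:ℝ)))^4 :=
    pow_le_pow_left₀ hb0 hb 4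
  -- combine: 64 K² S³ · 81 M⁴ ≤ 81 M⁴ (D−H)⁴
  have c2 := mul_le_mul_of_nonneg_left h1 (by positivity : (0:ℝ) ≤ 81*(m:ℝ))
  have h4 : 64*(k:ℝ)^2*(s:ℝ)^3*(81*(m:ℝ)^4) ≤ 81*(m:ℝ)^4*((δ:ℝ)-(h:ℝ))^4 := by
    calc 64*(k:ℝ)^2*(s:ℝ)^3*(81*(m:ℝ)^4)
        = 81*(m:ℝ)*(64*(k:ℝ)^2*(s:ℝ)^3*(m:ℝ)^3) := by ring
    _ ≤ 81*(m:ℝ)*((δ:ℝ)^4*((2*(m:ℝ) - (δ:ℝ) + 1)/2)^3) := c2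
    _ ≤ (δ:ℝ)^4*(3*(m:ℝ)-(δ:ℝ))^4 := h2
    _ = ((δ:ℝ)*(3*(m:ℝ)-(δ:ℝ)))^4 := by ring
    _ ≤ (3*(m:ℝ)*((δ:ℝ)-(h:ℝ)))^4 := h3
    _ = 81*(m:ℝ)^4*((δ:ℝ)-(h:ℝ))^4 := by ring
  have h5 : 64*(k:ℝ)^2*(s:ℝ)^3 ≤ ((δ:ℝ)-(h:ℝ))^4 := by
    have h6 : (0:ℝ) < 81*(m:ℝ)^4 := by positivity
    have h4' : (81*(m:ℝ)^4)*(64*(k:ℝ)^2*(s:ℝ)^3) ≤ (81*(m:ℝ)^4)*(((δ:ℝ)-(h:ℝ))^4) := by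
      linarith [h4]
    exact le_of_mul_le_mul_left h4' h6
  have h7 : ((δ:ℝ)-(h:ℝ)) = (((δ-h:ℕ)):ℝ) := by
    rw [Nat.cast_sub hhδ']
  rw [h7] at h5
  exact_mod_cast h5


theorem budget_real (K D M H U G T : ℝ)
    (hK0 : 0 ≤ K) (hU0 : 0 ≤ U) (hG0 : 0 ≤ G) (hT0 : 0 ≤ T) (hH0 : 0 ≤ H)
    (hK : 2 ≤ K) (hinv : 64*K^2*M^3 ≤ D^4) (hE : 256*M ≤ D^2) (hδm : D < M)
    (hD0 : 0 ≤ D) (hM0 : 0 < M)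
    (hh2 : D^2 < 3*M*(H+1))
    (hu1 : 8*M*U ≤ D^2) (hu2 : D^2 < 8*M*(U+1))
    (hg : G + U + 1 = H) (hT : G*T ≤ M + G) :
    K + K*K*T ≤ U := by
  have hD2 : (0:ℝ) < D^2 := lt_of_lt_of_le (by positivity) hE
  have hMH : M*H = M*G + M*U + M := by rw [← hg]; ring
  have f2 : D^2 ≤ 5*(M*G) := by nlinarith [hh2, hu1, hE, hMH]
  have hGpos : (0:ℝ) < G := by nlinarith [f2, hE, hM0]
  have f1 : 64*K^2*M ≤ D^2 := by
    have hDM2 : D^2 ≤ M^2 := by nlinarith [hδm, hD0]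
    have h1 : (64*K^2*M)*M^2 ≤ D^2*M^2 := by nlinarith [hinv, hD2, hDM2]
    exact le_of_mul_le_mul_right h1 (by positivity)
  have q1 : 64*K^2*M*(M*G) ≤ D^2*(M*G) :=
    mul_le_mul_of_nonneg_right f1 (by positivity)
  have q2 : 2*K*(M^2*G) ≤ K^2*(M^2*G) :=
    mul_le_mul_of_nonneg_right (by nlinarith [sq_nonneg (K-2), hK] : 2*K ≤ K^2)
      (by positivity)
  have q3 : D^2*D^2 ≤ 5*(M*G)*D^2 := mul_le_mul_of_nonneg_right f2 (le_of_lt hD2)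
  have q5 : 256*M*(M*G) ≤ D^2*(M*G) :=
    mul_le_mul_of_nonneg_right hE (by positivity)
  have core' : M*(8*M*K*G + 8*K^2*M^2 + 8*M*K^2*G + 8*M*G) ≤ M*(D^2*G) := by
    nlinarith [q1, q2, q3, q5, hinv]
  have core : 8*M*K*G + 8*K^2*M^2 + 8*M*K^2*G + 8*M*G ≤ D^2*G :=
    le_of_mul_le_mul_left core' hM0
  have step1 : 8*M*G*(K + K*K*T) ≤ D^2*G - 8*M*G := by
    have h1 : K*K*(G*T) ≤ K*K*(M+G) :=
      mul_le_mul_of_nonneg_left hT (by positivity)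
    have h1' := mul_le_mul_of_nonneg_left h1 (by positivity : (0:ℝ) ≤ 8*M)
    nlinarith [h1', core]
  have step2 : D^2*G - 8*M*G ≤ 8*M*U*G := by
    have h2 := mul_le_mul_of_nonneg_right (le_of_lt hu2) hG0
    have h3 : (8*M*(U+1))*G = 8*M*U*G + 8*M*G := by ring
    linarith [h2]
  have final : 8*M*G*(K + K*K*T) ≤ 8*M*G*U := by linarith [step1, step2]
  exact le_of_mul_le_mul_left final (by positivity)


theorem budget (k δ m h u g T : ℕ)
    (hk : 2 ≤ k) (hinv : 64*k^2*m^3 ≤ δ^4) (hE : 256*m ≤ δ^2) (hδm : δ < m)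
    (hh2 : δ^2 < 3*m*(h+1))
    (hu1 : 8*m*u ≤ δ^2) (hu2 : δ^2 < 8*m*(u+1))
    (hg : g + u + 1 = h) (hT : g*T ≤ m + g) :
    k + (k*k)*T ≤ u := by
  have hm0 : (0:ℝ) < (m:ℝ) := by
    have : 0 < m := by omega
    exact_mod_cast this
  have final : ((k:ℝ)) + (k:ℝ)*(k:ℝ)*(T:ℝ) ≤ (u:ℝ) := by
    refine budget_real (k:ℝ) (δ:ℝ) (m:ℝ) (h:ℝ) (u:ℝ) (g:ℝ) (T:ℝ)
      (by positivity) (by positivity) (by positivity) (by positivity) (by positivity)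
      (by exact_mod_cast hk) (by exact_mod_cast hinv) (by exact_mod_cast hE)
      (by exact_mod_cast hδm) (by positivity) hm0
      (by exact_mod_cast hh2) (by exact_mod_cast hu1) (by exact_mod_cast hu2)
      (by exact_mod_cast hg) (by exact_mod_cast hT)
  exact_mod_cast final


variable {V : Type*}

theorem chain_to_path (A : V → V → Prop) :
    ∀ (N : ℕ) (l : List V) (x z : V), l.length ≤ N →
      List.Chain' A (x :: l ++ [z]) → x ≠ z →
      ∃ p : List V, (∀ v ∈ p, v ∈ l) ∧ List.Chain' A (x :: p ++ [z]) ∧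
        (x :: p ++ [z]).Nodup ∧ p.length ≤ l.length := by
  intro N
  induction N with
  | zero =>
    intro l x z hlen hch hxz
    have hl : l = [] := List.eq_nil_of_length_eq_zero (Nat.le_zero.mp hlen)
    subst hl
    exact ⟨[], by simp, hch, by simp [hxz], by simp⟩
  | succ N ih =>
    intro l x z hlen hch hxz
    by_cases hx : x ∈ l
    · obtain ⟨l₁, l₂, rfl⟩ := List.append_of_mem hx
      have hch₂ : List.Chain' A (x :: l₂ ++ [z]) := by
        have hsplit : x :: (l₁ ++ x :: l₂) ++ [z] = (x :: l₁) ++ (x :: l₂ ++ [z]) := by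
          simp
        rw [hsplit] at hch
        exact (List.isChain_append.mp hch).2.1
      have hlen₂ : l₂.length ≤ N := by
        have : (l₁ ++ x :: l₂).length ≤ N + 1 := hlen
        simp [List.length_append] at this
        omega
      obtain ⟨p, hp₁, hp₂, hp₃, hp₄⟩ := ih l₂ x z hlen₂ hch₂ hxz
      exact ⟨p, fun v hv => by simp [hp₁ v hv], hp₂, hp₃, by
        simp [List.length_append]; omega⟩
    · match l with
      | [] => exact ⟨[], by simp, hch, by simp [hxz], by simp⟩
      | a :: l' =>
        have hch' : List.Chain' A (x :: (a :: (l' ++ [z]))) := by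
          simpa using hch
        rw [List.Chain', List.isChain_cons_cons] at hch'
        have hxa : A x a := hch'.1
        have hch'' : List.Chain' A (a :: l' ++ [z]) := by simpa [List.Chain'] using hch'.2
        by_cases haz : a = z
        · subst haz
          refine ⟨[], by simp, ?_, by simp [hxz], by simp⟩
          simpa [List.Chain'] using List.isChain_pair.mpr hxa
        · have hlen' : l'.length ≤ N := by simpa using Nat.le_of_succ_le_succ hlen
          obtain ⟨p, hp₁, hp₂, hp₃, hp₄⟩ := ih l' a z hlen' hch'' haz
          refine ⟨a :: p, ?_, ?_, ?_, by simpa using Nat.succ_le_succ hp₄⟩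
          · intro v hv
            rcases List.mem_cons.mp hv with rfl | hv
            · simp
            · simp [hp₁ v hv]
          · rw [show x :: (a :: p) ++ [z] = x :: (a :: (p ++ [z])) by simp,
              List.Chain', List.isChain_cons_cons]
            exact ⟨hxa, by simpa [List.Chain'] using hp₂⟩
          · rw [show x :: (a :: p) ++ [z] = x :: ((a :: p) ++ [z]) by simp]
            refine List.nodup_cons.mpr ⟨?_, by simpa using hp₃⟩
            intro hmem
            rcases List.mem_cons.mp hmem with rfl | hmem
            · exact hx (by simp)
            · rcases List.mem_append.mp hmem with hmem | hmem
              · exact hx (by simp [List.mem_cons.mpr (Or.inr (hp₁ _ hmem))])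
              · exact hxz (by simpa using hmem)


variable [Fintype V]

noncomputable def nout (A : V → V → Prop) (W S : Finset V) : Finset V :=
  W.filter (fun w => ∃ v ∈ S, A v w)


noncomputable def bfs (A : V → V → Prop) (W Forb : Finset V) (x : V) : ℕ → Finset V
  | 0 => {x}
  | (t+1) => bfs A W Forb x t ∪
      (W.filter fun w => w ∉ Forb ∧ w ∉ bfs A W Forb x t ∧ ∃ v ∈ bfs A W Forb x t, A v w)


theorem bfs_mono (A : V → V → Prop) (W Forb : Finset V) (x : V) (t : ℕ) :
    bfs A W Forb x t ⊆ bfs A W Forb x (t + 1) := by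
  intro v hv; simp [bfs, hv]


theorem mem_bfs_self (A : V → V → Prop) (W Forb : Finset V) (x : V) (t : ℕ) :
    x ∈ bfs A W Forb x t := by
  induction t with
  | zero => simp [bfs]
  | succ t ih => exact bfs_mono A W Forb x t ih


theorem bfs_subset (A : V → V → Prop) (W Forb : Finset V) (x : V) (hx : x ∈ W) (t : ℕ) :
    bfs A W Forb x t ⊆ W := by
  induction t with
  | zero => simpa [bfs] using hx
  | succ t ih =>
    intro v hv
    rcases Finset.mem_union.mp hv with hv | hv
    · exact ih hv
    · exact (Finset.mem_filter.mp hv).1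


theorem bfs_walk (A : V → V → Prop) (W Forb : Finset V) (x : V) :
    ∀ (t : ℕ) (z : V), z ∈ bfs A W Forb x t → z = x ∨
      ∃ l : List V, List.Chain' A (x :: l ++ [z]) ∧
        (∀ v ∈ l, v = x ∨ (v ∈ W ∧ v ∉ Forb)) ∧ (z ∈ W ∧ z ∉ Forb) ∧ l.length + 1 ≤ t := by
  intro t
  induction t with
  | zero => intro z hz; left; simpa [bfs] using hz
  | succ t ih =>
    intro z hz
    rcases Finset.mem_union.mp hz with hz | hz
    · rcases ih z hz with h | ⟨l, h₁, h₂, h₃, h₄⟩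
      · exact Or.inl h
      · exact Or.inr ⟨l, h₁, h₂, h₃, by omega⟩
    · right
      obtain ⟨hzW, hrest⟩ := Finset.mem_filter.mp hz
      obtain ⟨hzF, hznew, v, hvS, hvz⟩ := hrest
      rcases ih v hvS with rfl | ⟨l, h₁, h₂, h₃, h₄⟩
      · refine ⟨[], ?_, by simp, ⟨hzW, hzF⟩, by simp⟩
        simpa [List.Chain'] using List.isChain_pair.mpr hvz
      · refine ⟨l ++ [v], ?_, ?_, ⟨hzW, hzF⟩, by simp; omega⟩
        · have heq : x :: (l ++ [v]) ++ [z] = (x :: l ++ [v]) ++ [z] := by simp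
          rw [heq]
          refine List.IsChain.append h₁ (List.isChain_singleton z) ?_
          intro a ha b hb
          have hav : a = v := by
            have hlast : (x :: l ++ [v]).getLast? = some v := by
              rw [show x :: l ++ [v] = (x :: l) ++ [v] by simp]
              exact List.getLast?_concat
            rw [hlast] at ha
            exact (Option.some_inj.mp ha).symm
          have hbz : b = z := by simpa using hb.symm
          rw [hav, hbz]; exact hvz
        · intro w hw
          rcases List.mem_append.mp hw with hw | hw
          · exact h₂ w hw
          · simp at hw; subst hw
            exact Or.inr ⟨h₃.1, h₃.2⟩


theorem bfs_growth (A : V → V → Prop) (W Forb : Finset V) (x : V) (hx : x ∈ W)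
    (δ m h u g : ℕ)
    (hd : ∀ v ∈ W, δ ≤ (W.filter (fun w => A v w)).card)
    (hm : m = W.card)
    (hexp : ∀ S : Finset V, S ⊆ W → δ/2 ≤ S.card → S.card ≤ m - δ/2 →
      h ≤ ((nout A W S) \ S).card)
    (hFc : Forb.card + 1 ≤ u + 2)
    (hg : g + u + 1 ≤ h) (hhd : h + δ/2 ≤ δ + 1) (hu2 : u + 2 + δ/2 ≤ δ) :
    ∀ t : ℕ, min (m - δ/2 + 1) (1 + t * g) ≤ (bfs A W Forb x t).card := by
  intro t
  induction t with
  | zero =>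
    have : (bfs A W Forb x 0).card = 1 := by simp [bfs]
    omega
  | succ t ih =>
    set S := bfs A W Forb x t with hS
    by_cases hbig : m - δ/2 + 1 ≤ S.card
    · have hsub : S ⊆ bfs A W Forb x (t+1) := bfs_mono A W Forb x t
      have := Finset.card_le_card hsub
      omega
    · -- S is still small; it must grow by at least g
      have hcard : S.card ≤ m - δ/2 := by omega
      have hmin : 1 + t * g ≤ S.card := by omega
      have hSW : S ⊆ W := bfs_subset A W Forb x hx t
      set D := (W.filter fun w => w ∉ Forb ∧ w ∉ S ∧ ∃ v ∈ S, A v w) with hD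
      have hdisj : Disjoint S D := by
        refine Finset.disjoint_left.mpr ?_
        intro a haS haD
        exact ((Finset.mem_filter.mp haD).2.2.1 haS)
      have hDcard : g ≤ D.card := by
        by_cases hsmall : S.card < δ/2
        · -- small regime: use the outdegree of a single vertex
          have hxS : x ∈ S := mem_bfs_self A W Forb x t
          have hout : δ ≤ (W.filter (fun w => A x w)).card := hd x hx
          have hsub2 : (W.filter (fun w => A x w)) \ (S ∪ Forb) ⊆ D := by
            intro w hw
            obtain ⟨hw1, hw2⟩ := Finset.mem_sdiff.mp hw
            obtain ⟨hwW, hwA⟩ := Finset.mem_filter.mp hw1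
            simp only [Finset.mem_union, not_or] at hw2
            exact Finset.mem_filter.mpr ⟨hwW, hw2.2, hw2.1, x, hxS, hwA⟩
          have h1 : ((W.filter (fun w => A x w)) \ (S ∪ Forb)).card ≥
              δ - (S.card + Forb.card) := by
            have := Finset.le_card_sdiff (S ∪ Forb) (W.filter (fun w => A x w))
            have hcu : (S ∪ Forb).card ≤ S.card + Forb.card := Finset.card_union_le _ _
            omega
          have := Finset.card_le_card hsub2
          omega
        · -- expansion regime
          have hh := hexp S hSW (by omega) hcard
          have hsub2 : ((nout A W S) \ S) \ Forb ⊆ D := by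
            intro w hw
            obtain ⟨hw1, hwF⟩ := Finset.mem_sdiff.mp hw
            obtain ⟨hw2, hwS⟩ := Finset.mem_sdiff.mp hw1
            simp only [nout, Finset.mem_filter] at hw2
            obtain ⟨hwW, v, hvS, hvw⟩ := hw2
            exact Finset.mem_filter.mpr ⟨hwW, hwF, hwS, v, hvS, hvw⟩
          have h1 := Finset.le_card_sdiff Forb ((nout A W S) \ S)
          have := Finset.card_le_card hsub2
          omega
      have hcup : (bfs A W Forb x (t+1)).card = S.card + D.card := by
        have : bfs A W Forb x (t+1) = S ∪ D := by rw [hS, hD]; rfl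
        rw [this, Finset.card_union_of_disjoint hdisj]
      have hmul : (t+1) * g = t * g + g := by ring
      omega


theorem route (A : V → V → Prop) (W : Finset V) (δ m h u g T : ℕ)
    (hd : ∀ v ∈ W, δ ≤ (W.filter (fun w => A v w)).card)
    (hm : m = W.card)
    (hexp : ∀ S : Finset V, S ⊆ W → δ/2 ≤ S.card → S.card ≤ m - δ/2 →
      h ≤ ((nout A W S) \ S).card)
    (hg : g + u + 1 ≤ h) (hhd : h + δ/2 ≤ δ + 1) (hu2 : u + 2 + δ/2 ≤ δ)
    (hgpos : 0 < g) (hT : m < g * T)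
    (hzq : δ/2 + u + 2 ≤ δ - δ/4) (hδm : δ < m)
    (x y : V) (hx : x ∈ W) (hy : y ∈ W) (hxy : x ≠ y)
    (hyin : δ - δ/4 ≤ (W.filter (fun v => A v y)).card)
    (F : Finset V) (hF : F.card ≤ u) :
    ∃ p : List V, IsDipath A x y p ∧ p.length ≤ T ∧
      ∀ v ∈ p, v ∈ W ∧ v ∉ F ∧ v ≠ x ∧ v ≠ y := by
  set Forb := F ∪ {y} with hForb
  have hFc : Forb.card + 1 ≤ u + 2 := by
    have h1 : Forb.card ≤ F.card + ({y} : Finset V).card := Finset.card_union_le _ _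
    simp at h1; omega
  set R := bfs A W Forb x T with hR
  have hRcard : m - δ/2 + 1 ≤ R.card := by
    have := bfs_growth A W Forb x hx δ m h u g hd hm hexp hFc hg hhd hu2 T
    have h2 : m - δ/2 + 1 ≤ 1 + T * g := by
      have : m < T * g := by rw [mul_comm] at hT; exact hT
      omega
    rw [min_eq_left h2] at this
    rw [hR]
    omega
  have hRsub : R ⊆ W := bfs_subset A W Forb x hx T
  set Z := (W.filter (fun v => A v y)) \ (Forb ∪ {x}) with hZ
  have hZcard : δ/2 ≤ Z.card := by
    have h1 := Finset.le_card_sdiff (Forb ∪ {x}) (W.filter (fun v => A v y))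
    have h2 : (Forb ∪ {x}).card ≤ Forb.card + 1 := by
      have := Finset.card_union_le Forb ({x} : Finset V)
      simpa using this
    rw [hZ]
    omega
  have hZsub : Z ⊆ W := by
    intro v hv
    exact (Finset.mem_filter.mp (Finset.mem_sdiff.mp hv).1).1
  have hint : 0 < (R ∩ Z).card := by
    have h1 : (R ∪ Z).card ≤ m := by
      rw [hm]
      exact Finset.card_le_card (Finset.union_subset hRsub hZsub)
    have h2 := Finset.card_union_add_card_inter R Z
    have h3 : δ/2 ≤ m := by omega
    omega
  obtain ⟨z, hz⟩ := Finset.card_pos.mp hint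
  have hzR : z ∈ R := (Finset.mem_inter.mp hz).1
  have hzZ : z ∈ Z := (Finset.mem_inter.mp hz).2
  obtain ⟨hz1, hz2⟩ := Finset.mem_sdiff.mp hzZ
  have hzy : A z y := (Finset.mem_filter.mp hz1).2
  have hzx : z ≠ x := by
    intro hzx; exact hz2 (by simp [hzx])
  have hzF : z ∉ Forb := fun hc => hz2 (by simp [hc])
  rcases bfs_walk A W Forb x T z hzR with rfl | ⟨l, hl₁, hl₂, hl₃, hl₄⟩
  · exact absurd rfl hzx
  obtain ⟨p, hp₁, hp₂, hp₃, hp₄⟩ :=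
    chain_to_path A l.length l x z le_rfl hl₁ (Ne.symm hzx)
  have hxp : x ∉ p := by
    intro hc
    have := hp₃
    rw [show x :: p ++ [z] = x :: (p ++ [z]) by simp] at this
    exact (List.nodup_cons.mp this).1 (List.mem_append.mpr (Or.inl hc))
  have hyForb : y ∈ Forb := by simp [hForb]
  have hmemp : ∀ v ∈ p, v ∈ W ∧ v ∉ Forb := by
    intro v hv
    rcases hl₂ v (hp₁ v hv) with rfl | hvW
    · exact absurd hv hxp
    · exact hvW
  refine ⟨p ++ [z], ⟨?_, ?_⟩, ?_, ?_⟩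
  · -- chain
    have heq : x :: (p ++ [z]) ++ [y] = (x :: p ++ [z]) ++ [y] := by simp
    rw [heq]
    refine List.IsChain.append hp₂ (List.isChain_singleton y) ?_
    intro a ha b hb
    have hav : a = z := by
      have hlast : (x :: p ++ [z]).getLast? = some z := by
        rw [show x :: p ++ [z] = (x :: p) ++ [z] by simp]
        exact List.getLast?_concat
      rw [hlast] at ha
      exact (Option.some_inj.mp ha).symm
    have hby : b = y := by simpa using hb.symm
    rw [hav, hby]; exact hzy
  · -- nodup
    have heq : x :: (p ++ [z]) ++ [y] = (x :: p ++ [z]) ++ [y] := by simp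
    rw [heq]
    rw [List.nodup_append]
    refine ⟨hp₃, by simp, ?_⟩
    intro a ha
    simp only [List.mem_singleton]
    intro _ hb hay
    subst hb
    subst hay
    have h3 : a = x ∨ a ∈ p ∨ a = z := by simpa using ha
    rcases h3 with rfl | hmem | rfl
    · exact hxy rfl
    · exact (hmemp _ hmem).2 hyForb
    · exact hzF hyForb
  · simp; omega
  · intro v hv
    rcases List.mem_append.mp hv with hv | hv
    · obtain ⟨hvW, hvF⟩ := hmemp v hv
      refine ⟨hvW, fun hc => hvF (by simp [hForb, hc]), ?_, ?_⟩
      · intro hc; exact hxp (hc ▸ hv)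
      · intro hc; exact hvF (hc ▸ hyForb)
    · have hvz : v = z := by simpa using hv
      subst hvz
      refine ⟨(Finset.mem_filter.mp hz1).1, fun hc => hzF (by simp [hForb, hc]), hzx, ?_⟩
      intro hc; exact hzF (hc ▸ hyForb)


theorem greedy (A : V → V → Prop) (W : Finset V) (δ m h u g T : ℕ)
    (hd : ∀ v ∈ W, δ ≤ (W.filter (fun w => A v w)).card)
    (hm : m = W.card)
    (hexp : ∀ S : Finset V, S ⊆ W → δ/2 ≤ S.card → S.card ≤ m - δ/2 →
      h ≤ ((nout A W S) \ S).card)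
    (hg : g + u + 1 ≤ h) (hhd : h + δ/2 ≤ δ + 1) (hu2 : u + 2 + δ/2 ≤ δ)
    (hgpos : 0 < g) (hT : m < g * T)
    (hzq : δ/2 + u + 2 ≤ δ - δ/4) (hδm : δ < m)
    (k : ℕ) (b : Fin k → V) (hbinj : Function.Injective b)
    (hbW : ∀ i, b i ∈ W)
    (hbin : ∀ i, δ - δ/4 ≤ (W.filter (fun v => A v (b i))).card)
    (hbud : k + (k*k)*T ≤ u) :
    ∀ L : List (Fin k × Fin k), L.Nodup → (∀ q ∈ L, q.1 ≠ q.2) → L.length ≤ k*k →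
    ∃ (P : Fin k × Fin k → List V) (used : Finset V),
      used.card ≤ L.length * T ∧
      (∀ q ∈ L, IsDipath A (b q.1) (b q.2) (P q) ∧
        ∀ v ∈ P q, v ∈ used ∧ v ∈ W ∧ ∀ i : Fin k, v ≠ b i) ∧
      (∀ q ∈ L, ∀ q' ∈ L, q ≠ q' → ∀ v ∈ P q, v ∉ P q') := by
  intro L
  induction L with
  | nil =>
    intro _ _ _
    exact ⟨fun _ => [], ∅, by simp, by simp, by simp⟩
  | cons q L' ih =>
    intro hnd hne hlen
    obtain ⟨hqL', hnd'⟩ := List.nodup_cons.mp hnd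
    obtain ⟨P', used', hcard', hprop', hdisj'⟩ :=
      ih hnd' (fun q' hq' => hne q' (List.mem_cons_of_mem q hq')) (by
        simp at hlen ⊢; omega)
    set F := used' ∪ Finset.univ.image b with hF
    have hFcard : F.card ≤ u := by
      have h1 : F.card ≤ used'.card + (Finset.univ.image b).card :=
        Finset.card_union_le _ _
      have h2 : (Finset.univ.image b).card ≤ k := by
        have := Finset.card_image_le (s := (Finset.univ : Finset (Fin k))) (f := b)
        simpa using this
      have h3 : L'.length + 1 ≤ k*k := by simpa using hlen
      have h4 : used'.card ≤ (k*k - 1) * T := by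
        have : L'.length ≤ k*k - 1 := by omega
        calc used'.card ≤ L'.length * T := hcard'
        _ ≤ (k*k-1)*T := Nat.mul_le_mul_right T this
      have h5 : k + (k*k)*T ≤ u := hbud
      have h6 : (k*k-1)*T + T ≤ (k*k)*T := by
        have : (k*k-1) + 1 ≤ k*k := by omega
        calc (k*k-1)*T + T = ((k*k-1)+1)*T := by ring
        _ ≤ (k*k)*T := Nat.mul_le_mul_right T this
      omega
    have hq12 : b q.1 ≠ b q.2 := fun hc => (hne q List.mem_cons_self) (hbinj hc)
    obtain ⟨p, hdip, hplen, hpprop⟩ :=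
      route A W δ m h u g T hd hm hexp hg hhd hu2 hgpos hT hzq hδm
        (b q.1) (b q.2) (hbW _) (hbW _) hq12 (hbin _) F hFcard
    have hpused' : ∀ v ∈ p, v ∉ used' := by
      intro v hv hc
      exact (hpprop v hv).2.1 (Finset.mem_union_left _ hc)
    refine ⟨Function.update P' q p, used' ∪ p.toFinset, ?_, ?_, ?_⟩
    · have h1 : (used' ∪ p.toFinset).card ≤ used'.card + p.toFinset.card :=
        Finset.card_union_le _ _
      have h2 : p.toFinset.card ≤ p.length := p.toFinset_card_le
      have h3 : (q :: L').length * T = L'.length * T + T := by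
        simp [List.length_cons]; ring
      omega
    · intro q' hq'
      rcases List.mem_cons.mp hq' with rfl | hq'
      · rw [Function.update_self]
        refine ⟨hdip, ?_⟩
        intro v hv
        refine ⟨Finset.mem_union_right _ (List.mem_toFinset.mpr hv), (hpprop v hv).1, ?_⟩
        intro i hvb
        exact (hpprop v hv).2.1 (Finset.mem_union_right _
          (Finset.mem_image.mpr ⟨i, Finset.mem_univ i, hvb.symm⟩))
      · have hne' : q' ≠ q := fun hc => hqL' (hc ▸ hq')
        rw [Function.update_of_ne hne']
        obtain ⟨h1, h2⟩ := hprop' q' hq'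
        exact ⟨h1, fun v hv => ⟨Finset.mem_union_left _ (h2 v hv).1,
          (h2 v hv).2.1, (h2 v hv).2.2⟩⟩
    · intro q₁ hq₁ q₂ hq₂ hq12' v hv hv2
      rcases List.mem_cons.mp hq₁ with he1 | hmem1 <;>
        rcases List.mem_cons.mp hq₂ with he2 | hmem2
      · exact absurd (he1.trans he2.symm) hq12'
      · -- q₁ = q (head), q₂ ∈ L'
        rw [he1, Function.update_self] at hv
        have hne2 : q₂ ≠ q := fun hc => hqL' (hc ▸ hmem2)
        rw [Function.update_of_ne hne2] at hv2
        exact hpused' v hv ((hprop' q₂ hmem2).2 v hv2).1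
      · -- q₁ ∈ L', q₂ = q
        have hne1 : q₁ ≠ q := fun hc => hqL' (hc ▸ hmem1)
        rw [Function.update_of_ne hne1] at hv
        rw [he2, Function.update_self] at hv2
        exact hpused' v hv2 ((hprop' q₁ hmem1).2 v hv).1
      · have hne1 : q₁ ≠ q := fun hc => hqL' (hc ▸ hmem1)
        have hne2 : q₂ ≠ q := fun hc => hqL' (hc ▸ hmem2)
        rw [Function.update_of_ne hne1] at hv
        rw [Function.update_of_ne hne2] at hv2
        exact hdisj' q₁ hmem1 q₂ hmem2 hq12' v hv hv2


theorem indeg_count (A : V → V → Prop) (W : Finset V) (δ : ℕ) (hδ4 : 4 ≤ δ)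
    (hd : ∀ v ∈ W, δ ≤ (W.filter (fun w => A v w)).card) (hm0 : 0 < W.card) :
    δ/4 + 1 ≤ (W.filter (fun w => δ - δ/4 ≤ (W.filter (fun v => A v w)).card)).card := by
  set q := δ - δ/4 with hq
  set Hi := W.filter (fun w => q ≤ (W.filter (fun v => A v w)).card) with hHi
  set m := W.card with hm
  have hsum : ∑ v ∈ W, (W.filter (fun w => A v w)).card
      = ∑ w ∈ W, (W.filter (fun v => A v w)).card := by
    simp only [Finset.card_filter]
    rw [Finset.sum_comm]
  have hlow : δ * m ≤ ∑ v ∈ W, (W.filter (fun w => A v w)).card := by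
    calc δ * m = ∑ _v ∈ W, δ := by rw [Finset.sum_const, smul_eq_mul, mul_comm]
    _ ≤ _ := Finset.sum_le_sum hd
  have hhigh : ∑ w ∈ W, (W.filter (fun v => A v w)).card ≤ Hi.card * m + m * (q-1) := by
    have hsplit := Finset.sum_filter_add_sum_filter_not W
      (fun w => q ≤ (W.filter (fun v => A v w)).card)
      (fun w => (W.filter (fun v => A v w)).card)
    have h1 : ∑ w ∈ W.filter (fun w => q ≤ (W.filter (fun v => A v w)).card),
        (W.filter (fun v => A v w)).card ≤ Hi.card * m := by
      rw [← hHi]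
      rw [← smul_eq_mul, ← Finset.sum_const]
      refine Finset.sum_le_sum ?_
      intro w _
      exact Finset.card_le_card (Finset.filter_subset _ _)
    have h2 : ∑ w ∈ W.filter (fun w => ¬ q ≤ (W.filter (fun v => A v w)).card),
        (W.filter (fun v => A v w)).card ≤ m * (q-1) := by
      calc ∑ w ∈ W.filter (fun w => ¬ q ≤ (W.filter (fun v => A v w)).card),
            (W.filter (fun v => A v w)).card
          ≤ ∑ _w ∈ W.filter (fun w => ¬ q ≤ (W.filter (fun v => A v w)).card), (q-1) := by
            refine Finset.sum_le_sum ?_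
            intro w hw
            have := (Finset.mem_filter.mp hw).2
            omega
      _ = (W.filter (fun w => ¬ q ≤ (W.filter (fun v => A v w)).card)).card * (q-1) := by
            rw [Finset.sum_const, smul_eq_mul]
      _ ≤ m * (q-1) := by
            refine Nat.mul_le_mul_right _ ?_
            exact Finset.card_le_card (Finset.filter_subset _ _)
    omega
  have hfinal : δ * m ≤ Hi.card * m + m * (q - 1) := by omega
  -- cancel m
  have hq1 : 1 ≤ q := by omega
  by_contra hc
  push_neg at hc
  have hHic : Hi.card ≤ δ/4 := by omega
  have : δ * m ≤ (δ/4) * m + m * (q-1) := by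
    have := Nat.mul_le_mul_right m hHic
    omega
  have h4 : m * δ ≤ m * (δ/4 + q - 1) := by
    calc m * δ = δ * m := by ring
    _ ≤ (δ/4)*m + m*(q-1) := this
    _ = m * (δ/4 + (q-1)) := by ring
    _ = m * (δ/4 + q - 1) := by congr 1; omega
  have h5 : δ ≤ δ/4 + q - 1 := Nat.le_of_mul_le_mul_left h4 hm0
  omega


theorem main (A : V → V → Prop) (hirr : Irreflexive A) (k : ℕ) (hk : 2 ≤ k) :
    ∀ (m : ℕ) (W : Finset V) (δ : ℕ), W.card = m → W.Nonempty →
      (∀ v ∈ W, δ ≤ (W.filter (fun w => A v w)).card) →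
      64*k^2*m^3 ≤ δ^4 → ContainsCompleteSubdivision A k := by
  intro m
  induction m using Nat.strong_induction_on with
  | _ m ih =>
    intro W δ hWm hWne hd hinv
    obtain ⟨v0, hv0⟩ := hWne
    have hδm : δ < m := by
      have h1 := hd v0 hv0
      have h2 : (W.filter (fun w => A v0 w)) ⊆ W.erase v0 := by
        intro w hw
        obtain ⟨hwW, hA⟩ := Finset.mem_filter.mp hw
        exact Finset.mem_erase.mpr ⟨fun hc => hirr v0 (hc ▸ hA), hwW⟩
      have h3 := Finset.card_le_card h2
      rw [Finset.card_erase_of_mem hv0] at h3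
      have hm0 : 0 < W.card := Finset.card_pos.mpr ⟨v0, hv0⟩
      omega
    have hm0 : 0 < m := by omega
    -- 256 m ≤ δ²  and 256 ≤ δ
    have hk2 : 4 ≤ k^2 := by nlinarith [hk]
    have h256m : 256*m ≤ δ^2 := by
      have e1 : 256*m^3 ≤ δ^4 := by
        have e0 : 64*4 ≤ 64*k^2 := Nat.mul_le_mul_left 64 hk2
        calc 256*m^3 = (64*4)*m^3 := by ring
        _ ≤ (64*k^2)*m^3 := Nat.mul_le_mul_right _ e0
        _ ≤ δ^4 := hinv
      have e2 : δ^4 ≤ δ^2*m^2 := by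
        have : δ^2 ≤ m^2 := Nat.pow_le_pow_left (le_of_lt hδm) 2
        calc δ^4 = δ^2*δ^2 := by ring
        _ ≤ δ^2*m^2 := Nat.mul_le_mul_left _ this
      have e3 : (256*m)*m^2 ≤ δ^2*m^2 := by
        calc (256*m)*m^2 = 256*m^3 := by ring
        _ ≤ δ^4 := e1
        _ ≤ δ^2*m^2 := e2
      exact Nat.le_of_mul_le_mul_right e3 (by positivity)
    have h256 : 256 ≤ δ := by
      have e1 : δ^2 ≤ δ*m := by
        calc δ^2 = δ*δ := sq δ
        _ ≤ δ*m := Nat.mul_le_mul_left δ (le_of_lt hδm)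
      have e2 : 256*m ≤ δ*m := le_trans h256m e1
      have e3 : m*256 ≤ m*δ := by
        calc m*256 = 256*m := by ring
        _ ≤ δ*m := e2
        _ = m*δ := by ring
      exact Nat.le_of_mul_le_mul_left e3 hm0
    -- parameters
    obtain ⟨h, hh_def⟩ : ∃ h, h = δ^2/(3*m) := ⟨_, rfl⟩
    obtain ⟨u, hu_def⟩ : ∃ u, u = δ^2/(8*m) := ⟨_, rfl⟩
    have hh1 : 3*m*h ≤ δ^2 := by
      rw [hh_def]
      calc 3*m*(δ^2/(3*m)) = (δ^2/(3*m))*(3*m) := by ring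
      _ ≤ δ^2 := Nat.div_mul_le_self _ _
    have hh2 : δ^2 < 3*m*(h+1) := by
      have e1 : 3*m*(δ^2/(3*m)) + δ^2 % (3*m) = δ^2 := Nat.div_add_mod _ _
      have e2 : δ^2 % (3*m) < 3*m := Nat.mod_lt _ (by omega)
      rw [hh_def]
      have e3 : 3*m*(δ^2/(3*m)+1) = 3*m*(δ^2/(3*m)) + 3*m := by ring
      omega
    have hu1 : 8*m*u ≤ δ^2 := by
      rw [hu_def]
      calc 8*m*(δ^2/(8*m)) = (δ^2/(8*m))*(8*m) := by ring
      _ ≤ δ^2 := Nat.div_mul_le_self _ _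
    have hu2 : δ^2 < 8*m*(u+1) := by
      have e1 : 8*m*(δ^2/(8*m)) + δ^2 % (8*m) = δ^2 := Nat.div_add_mod _ _
      have e2 : δ^2 % (8*m) < 8*m := Nat.mod_lt _ (by omega)
      rw [hu_def]
      have e3 : 8*m*(δ^2/(8*m)+1) = 8*m*(δ^2/(8*m)) + 8*m := by ring
      omega
    -- u + 53 ≤ h
    have hu_h : u + 53 ≤ h := by
      by_contra hc
      push_neg at hc
      have e1 : m*h ≤ m*u + 52*m := by
        have e0 : h ≤ u + 52 := by omega
        calc m*h ≤ m*(u+52) := Nat.mul_le_mul_left m e0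
        _ = m*u + 52*m := by ring
      have e2 : δ^2 < 3*(m*u) + 159*m := by
        have e3 : δ^2 < 3*(m*h) + 3*m := by
          have : 3*m*(h+1) = 3*(m*h) + 3*m := by ring
          omega
        have : 3*(m*h) ≤ 3*(m*u) + 156*m := by omega
        omega
      have e4 : 8*(m*u) ≤ δ^2 := by
        have : 8*m*u = 8*(m*u) := by ring
        omega
      linarith [h256m, e2, e4]
    -- 3h ≤ δ and 8u ≤ δ
    have hδm' : δ ≤ m := le_of_lt hδm
    have h3h : 3*h ≤ δ := by
      have e1 : δ^2 ≤ δ*m := by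
        calc δ^2 = δ*δ := sq δ
        _ ≤ δ*m := Nat.mul_le_mul_left δ hδm'
      have e3 : m*(3*h) ≤ m*δ := by
        calc m*(3*h) = 3*m*h := by ring
        _ ≤ δ*m := le_trans hh1 e1
        _ = m*δ := by ring
      exact Nat.le_of_mul_le_mul_left e3 hm0
    have h8u : 8*u ≤ δ := by
      have e1 : δ^2 ≤ δ*m := by
        calc δ^2 = δ*δ := sq δ
        _ ≤ δ*m := Nat.mul_le_mul_left δ hδm'
      have e3 : m*(8*u) ≤ m*δ := by
        calc m*(8*u) = 8*m*u := by ring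
        _ ≤ δ*m := le_trans hu1 e1
        _ = m*δ := by ring
      exact Nat.le_of_mul_le_mul_left e3 hm0
    obtain ⟨g, hg_def⟩ : ∃ g, g = h - u - 1 := ⟨_, rfl⟩
    have hgh : g + u + 1 = h := by omega
    have hgpos : 0 < g := by omega
    obtain ⟨T, hT_def⟩ : ∃ T, T = m/g + 1 := ⟨_, rfl⟩
    have hT1 : g*T ≤ m + g := by
      rw [hT_def]
      have e1 : g*(m/g) ≤ m := by
        calc g*(m/g) = (m/g)*g := by ring
        _ ≤ m := Nat.div_mul_le_self _ _
      calc g*(m/g+1) = g*(m/g) + g := by ring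
      _ ≤ m + g := by omega
    have hT2 : m < g*T := by
      have e1 : g*(m/g) + m % g = m := Nat.div_add_mod _ _
      have e2 : m % g < g := Nat.mod_lt _ hgpos
      rw [hT_def]
      have e3 : g*(m/g+1) = g*(m/g) + g := by ring
      omega
    have hbud : k + (k*k)*T ≤ u :=
      budget k δ m h u g T hk hinv h256m hδm hh2 hu1 hu2 hgh hT1
    have hhd : h + δ/2 ≤ δ + 1 := by omega
    have hu2' : u + 2 + δ/2 ≤ δ := by omega
    have hzq : δ/2 + u + 2 ≤ δ - δ/4 := by omega
    -- dichotomy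
    by_cases hbad : ∃ S : Finset V, S ⊆ W ∧ δ/2 ≤ S.card ∧ S.card ≤ m - δ/2 ∧
        ((nout A W S) \ S).card < h
    · obtain ⟨S, hSW, hS1, hS2, hS3⟩ := hbad
      have hScard_lt : S.card < m := by omega
      have hSne : S.Nonempty := Finset.card_pos.mp (by omega)
      have hd' : ∀ v ∈ S, δ - h ≤ (S.filter (fun w => A v w)).card := by
        intro v hvS
        have h1 := hd v (hSW hvS)
        have h2 : (W.filter (fun w => A v w)) \ S ⊆ (nout A W S) \ S := by
          intro w hw
          obtain ⟨hw1, hw2⟩ := Finset.mem_sdiff.mp hw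
          obtain ⟨hwW, hwA⟩ := Finset.mem_filter.mp hw1
          exact Finset.mem_sdiff.mpr ⟨Finset.mem_filter.mpr ⟨hwW, v, hvS, hwA⟩, hw2⟩
      -- card (filter ∩ S) ≥ δ - h + 1
        have h3 := Finset.card_le_card h2
        have h4 := Finset.card_inter_add_card_sdiff (W.filter (fun w => A v w)) S
        have h5 : (W.filter (fun w => A v w)) ∩ S ⊆ S.filter (fun w => A v w) := by
          intro w hw
          obtain ⟨hw1, hw2⟩ := Finset.mem_inter.mp hw
          exact Finset.mem_filter.mpr ⟨hw2, (Finset.mem_filter.mp hw1).2⟩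
        have h6 := Finset.card_le_card h5
        omega
      have hinv' : 64*k^2*(S.card)^3 ≤ (δ-h)^4 :=
        recurse_inv k δ m h S.card hinv h256 hδm hh1 hS2
      exact ih S.card hScard_lt S (δ-h) rfl hSne hd' hinv'
    · push_neg at hbad
      have hexp : ∀ S : Finset V, S ⊆ W → δ/2 ≤ S.card → S.card ≤ m - δ/2 →
          h ≤ ((nout A W S) \ S).card := by
        intro S h1 h2 h3
        exact hbad S h1 h2 h3
      -- branch vertices
      have hHi := indeg_count A W δ (by omega) hd (by omega)
      have hkδ : 128*k ≤ δ := by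
        have e1 : 64*k^2*m^3 ≤ δ^2*m^2 := by
          have : δ^2 ≤ m^2 := Nat.pow_le_pow_left hδm' 2
          calc 64*k^2*m^3 ≤ δ^4 := hinv
          _ = δ^2*δ^2 := by ring
          _ ≤ δ^2*m^2 := Nat.mul_le_mul_left _ this
        have e2 : (64*k^2*m)*m^2 ≤ (δ^2)*m^2 := by
          calc (64*k^2*m)*m^2 = 64*k^2*m^3 := by ring
          _ ≤ δ^2*m^2 := e1
        have e3 : 64*k^2*m ≤ δ^2 := Nat.le_of_mul_le_mul_right e2 (by positivity)
        have e4 : δ^2 ≤ δ*m := by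
          calc δ^2 = δ*δ := sq δ
          _ ≤ δ*m := Nat.mul_le_mul_left δ hδm'
        have e5 : m*(64*k^2) ≤ m*δ := by
          calc m*(64*k^2) = 64*k^2*m := by ring
          _ ≤ δ^2 := e3
          _ ≤ δ*m := e4
          _ = m*δ := by ring
        have e6 : 64*k^2 ≤ δ := Nat.le_of_mul_le_mul_left e5 hm0
        have e7 : 2*k ≤ k*k := Nat.mul_le_mul_right k hk
        have e8 : k^2 = k*k := sq k
        omega
      set Hi := W.filter (fun w => δ - δ/4 ≤ (W.filter (fun v => A v w)).card) with hHi_def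
      have hkHi : k ≤ Hi.card := by omega
      obtain ⟨t, htHi, htcard⟩ := Finset.exists_subset_card_eq hkHi
      set b : Fin k → V := fun i => (t.equivFin.symm (Fin.cast htcard.symm i) : {x // x ∈ t}).val
        with hb_def
      have hbinj : Function.Injective b := by
        intro a a' haa
        have h1 : (t.equivFin.symm (Fin.cast htcard.symm a)) =
            (t.equivFin.symm (Fin.cast htcard.symm a')) := Subtype.ext haa
        have h2 := t.equivFin.symm.injective h1
        exact Fin.ext (by simpa using congrArg Fin.val h2)
      have hbHi : ∀ i, b i ∈ Hi := fun i => htHi (t.equivFin.symm (Fin.cast htcard.symm i)).2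
      have hbW : ∀ i, b i ∈ W := fun i => (Finset.mem_filter.mp (hbHi i)).1
      have hbin : ∀ i, δ - δ/4 ≤ (W.filter (fun v => A v (b i))).card :=
        fun i => (Finset.mem_filter.mp (hbHi i)).2
      -- the list of ordered pairs
      set L : List (Fin k × Fin k) :=
        (((List.finRange k) ×ˢ (List.finRange k)).filter (fun q => decide (q.1 ≠ q.2)))
        with hL_def
      have hLnd : L.Nodup :=
        ((List.nodup_finRange k).product (List.nodup_finRange k)).filter _
      have hLne : ∀ q ∈ L, q.1 ≠ q.2 := by
        intro q hq
        have := List.of_mem_filter hq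
        simpa using this
      have hLlen : L.length ≤ k*k := by
        calc L.length ≤ ((List.finRange k) ×ˢ (List.finRange k)).length :=
          List.length_filter_le _ _
        _ = k*k := by rw [List.length_product]; simp
      have hLmem : ∀ i j : Fin k, i ≠ j → (i, j) ∈ L := by
        intro i j hij
        rw [hL_def]
        refine List.mem_filter.mpr ⟨?_, by simpa using hij⟩
        exact List.pair_mem_product.mpr ⟨List.mem_finRange i, List.mem_finRange j⟩
      obtain ⟨P, used, hcard, hprop, hdisj⟩ :=
        greedy A W δ m h u g T hd hWm.symm hexp (by omega) hhd hu2' hgpos hT2 hzq hδm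
          k b hbinj hbW hbin hbud L hLnd hLne hLlen
      refine ⟨b, fun i j => P (i, j), hbinj, ?_, ?_, ?_⟩
      · intro i j hij
        exact (hprop (i,j) (hLmem i j hij)).1
      · intro i j hij k' hk'
        exact ((hprop (i,j) (hLmem i j hij)).2 (b k') hk').2.2 k' rfl
      · intro i j i' j' hij hij' hne v hv
        exact hdisj (i,j) (hLmem i j hij) (i',j') (hLmem i' j' hij') hne v hv


end KOY

/-- **Kühn–Osthus–Young.** -/
theorem complete_subdivision_of_large_outdegree {V : Type*} [Fintype V]
    (A : V → V → Prop) (hirr : Irreflexive A) (n d : ℕ)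
    (hn : Fintype.card V = n) (hd : ∀ v : V, d ≤ outDeg A v) :
    ContainsCompleteSubdivision A ⌊(d : ℝ) ^ 2 / (8 * n * Real.sqrt n)⌋₊ := by
  set k := ⌊(d : ℝ) ^ 2 / (8 * n * Real.sqrt n)⌋₊ with hk_def
  rcases Nat.lt_or_ge k 2 with hk2 | hk2
  · -- k = 0 or k = 1
    interval_cases k
    · -- k = 0
      refine ⟨Fin.elim0, fun i => i.elim0, ?_, ?_, ?_, ?_⟩
      · intro a; exact a.elim0
      · intro i; exact i.elim0
      · intro i; exact i.elim0
      · intro i; exact i.elim0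
    · -- k = 1 : need a vertex
      have hn1 : 0 < n := by
        by_contra hc
        push_neg at hc
        have hn0 : n = 0 := by omega
        have : (1:ℕ) ≤ ⌊(d : ℝ) ^ 2 / (8 * n * Real.sqrt n)⌋₊ := by omega
        rw [hn0] at this
        norm_num at this
      have : 0 < Fintype.card V := by omega
      obtain ⟨v0⟩ := Fintype.card_pos_iff.mp this
      refine ⟨fun _ => v0, fun _ _ => [], fun a b _ => Subsingleton.elim a b, ?_, ?_, ?_⟩
      · intro i j hij; exact absurd (Subsingleton.elim i j) hij
      · intro i j hij; exact absurd (Subsingleton.elim i j) hij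
      · intro i j i' j' hij; exact absurd (Subsingleton.elim i j) hij
  · -- main case
    have hn1 : 0 < n := by
      by_contra hc
      push_neg at hc
      have hn0 : n = 0 := by omega
      have h2 : (2:ℕ) ≤ ⌊(d : ℝ) ^ 2 / (8 * n * Real.sqrt n)⌋₊ := hk2
      rw [hn0] at h2
      norm_num at h2
    have hsqrt_pos : (0:ℝ) < Real.sqrt n := Real.sqrt_pos.mpr (by exact_mod_cast hn1)
    have hden_pos : (0:ℝ) < 8 * n * Real.sqrt n := by
      have : (0:ℝ) < (n:ℝ) := by exact_mod_cast hn1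
      positivity
    have hfloor : (k:ℝ) ≤ (d : ℝ) ^ 2 / (8 * n * Real.sqrt n) := by
      rw [hk_def]
      exact Nat.floor_le (by positivity)
    have hmul : (k:ℝ) * (8 * n * Real.sqrt n) ≤ (d:ℝ)^2 := by
      rw [← le_div_iff₀ hden_pos]
      exact hfloor
    have hsq : ((k:ℝ) * (8 * n * Real.sqrt n))^2 ≤ ((d:ℝ)^2)^2 := by
      apply pow_le_pow_left₀ (by positivity) hmul
    have hinvr : 64*(k:ℝ)^2*(n:ℝ)^3 ≤ (d:ℝ)^4 := by
      have hss : Real.sqrt (n:ℝ) ^ 2 = (n:ℝ) := Real.sq_sqrt (by positivity)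
      calc 64*(k:ℝ)^2*(n:ℝ)^3 = (k:ℝ)^2 * (64*(n:ℝ)^2*(n:ℝ)) := by ring
      _ = (k:ℝ)^2 * (64*(n:ℝ)^2*(Real.sqrt n^2)) := by rw [hss]
      _ = ((k:ℝ) * (8 * n * Real.sqrt n))^2 := by ring
      _ ≤ ((d:ℝ)^2)^2 := hsq
      _ = (d:ℝ)^4 := by ring
    have hinv : 64*k^2*n^3 ≤ d^4 := by exact_mod_cast hinvr
    have hVpos : 0 < Fintype.card V := by omega
    have hWne : (Finset.univ : Finset V).Nonempty := Finset.univ_nonempty_iff.mpr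
      (Fintype.card_pos_iff.mp hVpos)
    refine KOY.main A hirr k hk2 n Finset.univ d ?_ hWne ?_ hinv
    · rw [Finset.card_univ, hn]
    · intro v _
      have := hd v
      simpa [outDeg] using this
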